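/- Let m ≥ 4 and G = ⟨a, b | a^(2^(m-1)) = b² = 1, b⁻¹ab = a^(1+2^(m-2))⟩. Then for every 1 ≤ s ≤ m-1, the number of elements g in G with g^(2^s) = 1 is at most 2 · 2^s. -/

import Mathlib

theorem stmt_8 (m : ℕ) (hm : 4 ≤ m) (G : Type*) [Group G] [Finite G] (a b : G)
    (hcard : Nat.card G = 2 ^ m)
    (ha : orderOf a = 2 ^ (m - 1)) (hb : orderOf b = 2)
    (hrel : b⁻¹ * a * b = a ^ (1 + 2 ^ (m - 2)))
    (hgen : Subgroup.closure {a, b} = ⊤) :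
    ∀ s : ℕ, 1 ≤ s → s ≤ m - 1 →
      Nat.card {g : G | g ^ (2 ^ s) = 1} ≤ 2 * 2 ^ s := by
  intro s hs1 hs2
  have hb2 : b * b = 1 := by
    have := pow_orderOf_eq_one b
    rw [hb] at this
    simpa [pow_two] using this
  have hbinv : b⁻¹ = b := inv_eq_of_mul_eq_one_right hb2
  have haN : a ^ (2 ^ (m - 1)) = 1 := by rw [← ha]; exact pow_orderOf_eq_one a
  have hbaib : ∀ i : ℕ, b * a ^ i * b = a ^ (i * (1 + 2 ^ (m - 2))) := by
    intro i
    have hbab : b * a * b⁻¹ = a ^ (1 + 2 ^ (m - 2)) := by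
      rw [hbinv]; rw [hbinv] at hrel; exact hrel
    calc b * a ^ i * b = (b * a * b⁻¹) ^ i := by rw [conj_pow, hbinv]
    _ = (a ^ (1 + 2 ^ (m - 2))) ^ i := by rw [hbab]
    _ = a ^ (i * (1 + 2 ^ (m - 2))) := by rw [← pow_mul, mul_comm]
  -- decomposition
  have hdecomp : ∀ g : G, ∃ i : ℕ, g = a ^ i ∨ g = a ^ i * b := by
    intro g
    have hg : g ∈ Subgroup.closure ({a, b} : Set G) := by rw [hgen]; trivial
    induction hg using Subgroup.closure_induction with
    | mem x hx =>
      rcases hx with h | h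
      · exact ⟨1, Or.inl (by simp [h])⟩
      · simp only [Set.mem_singleton_iff] at h
        exact ⟨0, Or.inr (by simp [h])⟩
    | one => exact ⟨0, Or.inl (by simp)⟩
    | mul x y hx hy ihx ihy =>
      obtain ⟨i, hi⟩ := ihx
      obtain ⟨j, hj⟩ := ihy
      rcases hi with hi | hi <;> rcases hj with hj | hj
      · exact ⟨i + j, Or.inl (by rw [hi, hj, pow_add])⟩
      · exact ⟨i + j, Or.inr (by rw [hi, hj, pow_add, mul_assoc])⟩
      · refine ⟨i + j * (1 + 2 ^ (m - 2)), Or.inr ?_⟩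
        rw [hi, hj, pow_add, ← hbaib j]
        simp only [mul_assoc, hb2, mul_one]
      · refine ⟨i + j * (1 + 2 ^ (m - 2)), Or.inl ?_⟩
        rw [hi, hj, pow_add, ← hbaib j]
        simp only [mul_assoc, hb2, mul_one]
    | inv x hx ihx =>
      obtain ⟨i, hi⟩ := ihx
      have hainv : (a ^ i)⁻¹ = a ^ (i * (2 ^ (m - 1) - 1)) := by
        refine inv_eq_of_mul_eq_one_right ?_
        rw [← pow_add]
        have he : i + i * (2 ^ (m - 1) - 1) = i * 2 ^ (m - 1) := by
          have h1 : (1:ℕ) ≤ 2 ^ (m - 1) := Nat.one_le_two_pow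
          have : 2 ^ (m - 1) = 1 + (2 ^ (m - 1) - 1) := by omega
          nth_rewrite 2 [this]
          ring
        rw [he, mul_comm, pow_mul, haN, one_pow]
      rcases hi with hi | hi
      · exact ⟨i * (2 ^ (m - 1) - 1), Or.inl (by rw [hi, hainv])⟩
      · refine ⟨i * (2 ^ (m - 1) - 1) * (1 + 2 ^ (m - 2)), Or.inr ?_⟩
        rw [hi, mul_inv_rev, hbinv, hainv, ← hbaib (i * (2 ^ (m - 1) - 1))]
        simp only [mul_assoc, hb2, mul_one]
  -- the covering function
  have hts : 2 ^ (m - 1 - s) * 2 ^ s = 2 ^ (m - 1) := by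
    rw [← pow_add]
    congr 1
    omega
  have hspos : 0 < 2 ^ s := Nat.pow_pos (by norm_num)
  set F : Fin (2 ^ s) × Fin 2 → G :=
    fun p => a ^ (2 ^ (m - 1 - s) * p.1.val) * b ^ p.2.val with hF
  -- reduce exponents mod 2^s
  have hred : ∀ j : ℕ,
      a ^ (2 ^ (m - 1 - s) * j) = a ^ (2 ^ (m - 1 - s) * (j % 2 ^ s)) := by
    intro j
    conv_lhs => rw [← Nat.div_add_mod j (2 ^ s)]
    rw [Nat.mul_add, pow_add, ← mul_assoc, hts, pow_mul, haN, one_pow, one_mul]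
  have hcover : {g : G | g ^ (2 ^ s) = 1} ⊆ Set.range F := by
    rintro g (hg : g ^ (2 ^ s) = 1)
    obtain ⟨i, hi | hi⟩ := hdecomp g
    · -- g = a ^ i
      have hdvd : 2 ^ (m - 1) ∣ i * 2 ^ s := by
        rw [← ha]
        apply orderOf_dvd_of_pow_eq_one
        rw [pow_mul, ← hi]
        exact hg
      rw [← hts] at hdvd
      have h2t : 2 ^ (m - 1 - s) ∣ i := (Nat.mul_dvd_mul_iff_right hspos).mp hdvd
      obtain ⟨j, hj⟩ := h2t
      refine ⟨(⟨j % 2 ^ s, Nat.mod_lt _ hspos⟩, ⟨0, by norm_num⟩), ?_⟩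
      simp only [hF, pow_zero, mul_one]
      rw [← hred j, ← hj, ← hi]
    · -- g = a ^ i * b
      have hsq : g ^ 2 = a ^ (i * (2 + 2 ^ (m - 2))) := by
        rw [pow_two, hi]
        calc a ^ i * b * (a ^ i * b) = a ^ i * (b * a ^ i * b) := by
              simp only [mul_assoc]
        _ = a ^ i * a ^ (i * (1 + 2 ^ (m - 2))) := by rw [hbaib]
        _ = a ^ (i * (2 + 2 ^ (m - 2))) := by rw [← pow_add]; congr 1; ring
      have hpow : g ^ (2 ^ s) = a ^ (i * (1 + 2 ^ (m - 3)) * 2 ^ s) := by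
        have h2s : 2 ^ s = 2 * 2 ^ (s - 1) := by
          rw [← pow_succ']
          congr 1
          omega
        have hk2 : (2:ℕ) ^ (m - 2) = 2 * 2 ^ (m - 3) := by
          rw [← pow_succ']
          congr 1
          omega
        calc g ^ (2 ^ s) = (g ^ 2) ^ (2 ^ (s - 1)) := by rw [← pow_mul, ← h2s]
        _ = a ^ (i * (2 + 2 ^ (m - 2)) * 2 ^ (s - 1)) := by rw [hsq, ← pow_mul]
        _ = a ^ (i * (1 + 2 ^ (m - 3)) * 2 ^ s) := by
              congr 1
              rw [hk2, h2s]
              ring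
      have hdvd : 2 ^ (m - 1) ∣ i * (1 + 2 ^ (m - 3)) * 2 ^ s := by
        rw [← ha]
        apply orderOf_dvd_of_pow_eq_one
        rw [← hpow]
        exact hg
      rw [← hts] at hdvd
      have h2t : 2 ^ (m - 1 - s) ∣ i * (1 + 2 ^ (m - 3)) :=
        (Nat.mul_dvd_mul_iff_right hspos).mp hdvd
      have hodd : Nat.Coprime (2 ^ (m - 1 - s)) (1 + 2 ^ (m - 3)) := by
        apply Nat.Coprime.pow_left
        rw [Nat.coprime_two_left, add_comm]
        exact Even.add_one (Nat.even_pow.mpr ⟨even_two, by omega⟩)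
      have h2ti : 2 ^ (m - 1 - s) ∣ i := hodd.dvd_of_dvd_mul_right h2t
      obtain ⟨j, hj⟩ := h2ti
      refine ⟨(⟨j % 2 ^ s, Nat.mod_lt _ hspos⟩, ⟨1, by norm_num⟩), ?_⟩
      simp only [hF, pow_one]
      rw [← hred j, ← hj, ← hi]
  -- cardinality count
  calc Nat.card {g : G | g ^ (2 ^ s) = 1}
      = Set.ncard {g : G | g ^ (2 ^ s) = 1} := (Nat.card_coe_set_eq _)
    _ ≤ (Set.range F).ncard := Set.ncard_le_ncard hcover (Set.toFinite _)
    _ ≤ Nat.card (Fin (2 ^ s) × Fin 2) := by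
        rw [← Set.image_univ]
        calc (F '' Set.univ).ncard ≤ Set.univ.ncard := Set.ncard_image_le Set.finite_univ
          _ = Nat.card (Fin (2 ^ s) × Fin 2) := Set.ncard_univ _
    _ = 2 * 2 ^ s := by simp [Nat.card_eq_fintype_card, mul_comm]
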